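/- Let dim be a Sylvester module rank function on a ring R, extended to finitely generated modules via dim M = inf { dim M' : M' finitely presented surjecting onto M }. Then for finitely generated modules the properties (SMod2) and (SMod3) still hold: dim(M₁ ⊕ M₂) = dim M₁ + dim M₂ for finitely generated M₁, M₂, and dim M₁ + dim M₃ ≥ dim M₂ ≥ dim M₃ for any exact sequence M₁ → M₂ → M₃ → 0 of finitely generated modules. -/

import Mathlib

/-- A Sylvester module rank function on a ring `R`: an assignment of a nonnegative real
number to each (bundled) `R`-module — only its values on finitely presented modules
matter — which is invariant under isomorphism of finitely presented modules and
satisfies `(SMod1)` `dim 0 = 0`, `dim R = 1`; `(SMod2)` additivity on direct sums; and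
`(SMod3)` `dim M₃ ≤ dim M₂ ≤ dim M₁ + dim M₃` for exact sequences `M₁ → M₂ → M₃ → 0`
of finitely presented modules. -/
structure SylvesterRank (R : Type) [Ring R] where
  /-- the rank of a bundled `R`-module -/
  d : ModuleCat.{0} R → ℝ
  nonneg : ∀ M : ModuleCat.{0} R, Module.FinitePresentation R M → 0 ≤ d M
  d_congr : ∀ M N : ModuleCat.{0} R, Module.FinitePresentation R M →
    Module.FinitePresentation R N → Nonempty (M ≃ₗ[R] N) → d M = d N
  d_zero : d (ModuleCat.of R PUnit) = 0
  d_one : d (ModuleCat.of R R) = 1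
  d_add : ∀ M N : ModuleCat.{0} R, Module.FinitePresentation R M →
    Module.FinitePresentation R N → d (ModuleCat.of R (M × N)) = d M + d N
  d_exact : ∀ (M₁ M₂ M₃ : ModuleCat.{0} R), Module.FinitePresentation R M₁ →
    Module.FinitePresentation R M₂ → Module.FinitePresentation R M₃ →
    ∀ (f : M₁ →ₗ[R] M₂) (g : M₂ →ₗ[R] M₃), Function.Exact f g → Function.Surjective g →
      d M₃ ≤ d M₂ ∧ d M₂ ≤ d M₁ + d M₃

/-- The extension of a Sylvester module rank function to arbitrary (in practice,
finitely generated) modules: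
`dim M = inf { dim M′ : M′ finitely presented, M a quotient of M′ }`. -/
noncomputable def SylvesterRank.toFG {R : Type} [Ring R] (ρ : SylvesterRank R)
    (M : ModuleCat.{0} R) : ℝ :=
  sInf {x : ℝ | ∃ M' : ModuleCat.{0} R, Module.FinitePresentation R M' ∧
    (∃ f : M' →ₗ[R] M, Function.Surjective f) ∧ x = ρ.d M'}

section Auxiliary

variable {R : Type} [Ring R]

/-- A product of finitely presented modules is finitely presented. -/
lemma SylvesterRankAux.fpProd (M N : Type) [AddCommGroup M] [Module R M] [AddCommGroup N]
    [Module R N] (hM : Module.FinitePresentation R M) (hN : Module.FinitePresentation R N) :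
    Module.FinitePresentation R (M × N) := by
  haveI := hM; haveI := hN
  obtain ⟨m, f, hf⟩ := Module.Finite.exists_fin' R M
  obtain ⟨n, g, hg⟩ := Module.Finite.exists_fin' R N
  haveI : Module.FinitePresentation R ((Fin m → R) × (Fin n → R)) :=
    Module.finitePresentation_of_projective _ _
  refine Module.finitePresentation_of_surjective (f.prodMap g)
    (Prod.map_surjective.mpr ⟨hf, hg⟩) ?_
  rw [LinearMap.ker_prodMap]
  exact Submodule.FG.prod (Module.FinitePresentation.fg_ker f hf)
    (Module.FinitePresentation.fg_ker g hg)

lemma SylvesterRankAux.le_csInf_add_csInf {A B : Set ℝ} (hA : A.Nonempty) (hB : B.Nonempty)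
    {c : ℝ} (h : ∀ a ∈ A, ∀ b ∈ B, c ≤ a + b) : c ≤ sInf A + sInf B := by
  have h1 : ∀ b ∈ B, c - sInf A ≤ b := by
    intro b hb
    have : c - b ≤ sInf A := le_csInf hA fun a ha => by linarith [h a ha b hb]
    linarith
  have := le_csInf hB h1
  linarith

namespace SylvesterRank

variable (ρ : SylvesterRank R)

/-- The set of values of `ρ.d` over finitely presented covers of `M`. -/
def fgSet (M : ModuleCat.{0} R) : Set ℝ :=
  {x : ℝ | ∃ M' : ModuleCat.{0} R, Module.FinitePresentation R M' ∧
    (∃ f : M' →ₗ[R] M, Function.Surjective f) ∧ x = ρ.d M'}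

lemma toFG_eq (M : ModuleCat.{0} R) : ρ.toFG M = sInf (ρ.fgSet M) := rfl

lemma bddBelow_fgSet (M : ModuleCat.{0} R) : BddBelow (ρ.fgSet M) :=
  ⟨0, fun _ ⟨N, hN, _, hx⟩ => hx ▸ ρ.nonneg N hN⟩

lemma mem_fgSet {M N : ModuleCat.{0} R} (hN : Module.FinitePresentation R N)
    (f : N →ₗ[R] M) (hf : Function.Surjective f) : ρ.d N ∈ ρ.fgSet M :=
  ⟨N, hN, ⟨f, hf⟩, rfl⟩

lemma toFG_le {M N : ModuleCat.{0} R} (hN : Module.FinitePresentation R N)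
    (f : N →ₗ[R] M) (hf : Function.Surjective f) : ρ.toFG M ≤ ρ.d N :=
  csInf_le (ρ.bddBelow_fgSet M) (ρ.mem_fgSet hN f hf)

lemma fgSet_nonempty {M : ModuleCat.{0} R} (hM : Module.Finite R M) :
    (ρ.fgSet M).Nonempty := by
  haveI := hM
  obtain ⟨n, f, hf⟩ := Module.Finite.exists_fin' R M
  exact ⟨_, ρ.mem_fgSet (M := M) (N := ModuleCat.of R (Fin n → R))
    (inferInstance : Module.FinitePresentation R (Fin n → R)) f hf⟩

/-- Quotient bound: `d Q ≤ d N` for a surjection of finitely presented modules. -/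
lemma d_le_of_surjective (N Q : ModuleCat.{0} R) (hN : Module.FinitePresentation R N)
    (hQ : Module.FinitePresentation R Q) (θ : N →ₗ[R] Q) (hθ : Function.Surjective θ) :
    ρ.d Q ≤ ρ.d N := by
  haveI := hN; haveI := hQ
  obtain ⟨s, hs⟩ := Module.FinitePresentation.fg_ker θ hθ
  set f : ((s : Set N) →₀ R) →ₗ[R] N := Finsupp.linearCombination R Subtype.val with hfdef
  have hrange : LinearMap.range f = LinearMap.ker θ := by
    rw [hfdef, Finsupp.range_linearCombination, Subtype.range_val, hs]
  refine (ρ.d_exact (ModuleCat.of R ((s : Set N) →₀ R)) N Q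
    (inferInstance : Module.FinitePresentation R ((s : Set N) →₀ R)) hN hQ f θ
    ?_ hθ).1
  rw [LinearMap.exact_iff, hrange]

/-- The key superadditivity estimate: if a finitely presented `N` surjects onto
`M₁ × M₂` then `ρ.toFG M₁ + ρ.toFG M₂ ≤ ρ.d N`. -/
lemma toFG_add_toFG_le (M₁ M₂ N : ModuleCat.{0} R) (h₁ : Module.Finite R M₁)
    (h₂ : Module.Finite R M₂) (hN : Module.FinitePresentation R N)
    (φ : N →ₗ[R] ModuleCat.of R (M₁ × M₂)) (hφ : Function.Surjective φ) :
    ρ.toFG M₁ + ρ.toFG M₂ ≤ ρ.d N := by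
  classical
  haveI := h₁; haveI := h₂; haveI := hN
  obtain ⟨s, τ, hτ⟩ := Module.Finite.exists_fin' R N
  obtain ⟨n₁, σ₁, hσ₁⟩ := Module.Finite.exists_fin' R M₁
  obtain ⟨n₂, σ₂, hσ₂⟩ := Module.Finite.exists_fin' R M₂
  obtain ⟨x₁, hx₁⟩ := Module.projective_lifting_property φ
    ((LinearMap.inl R M₁ M₂) ∘ₗ σ₁) hφ
  obtain ⟨x₂, hx₂⟩ := Module.projective_lifting_property φ
    ((LinearMap.inr R M₁ M₂) ∘ₗ σ₂) hφ
  obtain ⟨u, hu⟩ := Module.projective_lifting_property φ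
    ((LinearMap.inl R M₁ M₂) ∘ₗ (LinearMap.fst R M₁ M₂) ∘ₗ φ ∘ₗ τ) hφ
  set v : (Fin s → R) →ₗ[R] N := τ - u with hv
  set A : Submodule R N := LinearMap.range x₁ ⊔ LinearMap.range u with hA
  set B : Submodule R N := LinearMap.range x₂ ⊔ LinearMap.range v with hB
  have hAfg : A.FG := Submodule.FG.sup
    (LinearMap.range_eq_map x₁ ▸ Submodule.FG.map _ Module.Finite.fg_top)
    (LinearMap.range_eq_map u ▸ Submodule.FG.map _ Module.Finite.fg_top)
  have hBfg : B.FG := Submodule.FG.sup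
    (LinearMap.range_eq_map x₂ ▸ Submodule.FG.map _ Module.Finite.fg_top)
    (LinearMap.range_eq_map v ▸ Submodule.FG.map _ Module.Finite.fg_top)
  have hsup : A ⊔ B = ⊤ := by
    rw [eq_top_iff]
    rintro x -
    obtain ⟨w, rfl⟩ := hτ x
    have : τ w = u w + v w := by simp [hv]
    rw [this]
    exact Submodule.add_mem _
      (Submodule.mem_sup_left (Submodule.mem_sup_right ⟨w, rfl⟩))
      (Submodule.mem_sup_right (Submodule.mem_sup_right ⟨w, rfl⟩))
  have hA_ker : A ≤ LinearMap.ker ((LinearMap.snd R M₁ M₂) ∘ₗ φ) := by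
    rw [hA, sup_le_iff]
    constructor
    · rintro _ ⟨z, rfl⟩
      have := LinearMap.congr_fun hx₁ z
      simp only [LinearMap.coe_comp, Function.comp_apply] at this ⊢
      rw [LinearMap.mem_ker]
      show (φ (x₁ z)).2 = 0
      rw [this]; rfl
    · rintro _ ⟨z, rfl⟩
      have := LinearMap.congr_fun hu z
      simp only [LinearMap.coe_comp, Function.comp_apply] at this ⊢
      rw [LinearMap.mem_ker]
      show (φ (u z)).2 = 0
      rw [this]; rfl
  have hB_ker : B ≤ LinearMap.ker ((LinearMap.fst R M₁ M₂) ∘ₗ φ) := by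
    rw [hB, sup_le_iff]
    constructor
    · rintro _ ⟨z, rfl⟩
      have := LinearMap.congr_fun hx₂ z
      simp only [LinearMap.coe_comp, Function.comp_apply] at this ⊢
      rw [LinearMap.mem_ker]
      show (φ (x₂ z)).1 = 0
      rw [this]; rfl
    · rintro _ ⟨z, rfl⟩
      have huz := LinearMap.congr_fun hu z
      simp only [LinearMap.coe_comp, Function.comp_apply] at huz ⊢
      rw [LinearMap.mem_ker]
      show (φ (v z)).1 = 0
      have hvz : φ (v z) = φ (τ z) - φ (u z) := by
        rw [hv]; simp [map_sub]
      rw [hvz, huz, Prod.fst_sub]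
      exact sub_eq_zero_of_eq rfl
  have hQ₁fp : Module.FinitePresentation R (N ⧸ B) :=
    Module.finitePresentation_of_surjective B.mkQ B.mkQ_surjective
      (by rw [Submodule.ker_mkQ]; exact hBfg)
  have hQ₂fp : Module.FinitePresentation R (N ⧸ A) :=
    Module.finitePresentation_of_surjective A.mkQ A.mkQ_surjective
      (by rw [Submodule.ker_mkQ]; exact hAfg)
  set θ : N →ₗ[R] (N ⧸ B) × (N ⧸ A) := LinearMap.prod B.mkQ A.mkQ with hθdef
  have hθ : Function.Surjective θ := by
    rintro ⟨q₁, q₂⟩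
    obtain ⟨a, rfl⟩ := B.mkQ_surjective q₁
    obtain ⟨b, rfl⟩ := A.mkQ_surjective q₂
    have : a - b ∈ A ⊔ B := hsup ▸ Submodule.mem_top
    obtain ⟨p, hp, q, hq, hpq⟩ := Submodule.mem_sup.mp this
    refine ⟨a - q, ?_⟩
    simp only [hθdef, LinearMap.prod_apply, Pi.prod]
    refine Prod.ext ?_ ?_
    · show B.mkQ (a - q) = B.mkQ a
      rw [Submodule.mkQ_apply, Submodule.mkQ_apply, Submodule.Quotient.eq]
      simpa using hq
    · show A.mkQ (a - q) = A.mkQ b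
      rw [Submodule.mkQ_apply, Submodule.mkQ_apply, Submodule.Quotient.eq]
      have h9 : a - q - b = p := by
        rw [eq_sub_of_add_eq hpq]; abel
      rw [h9]; exact hp
  set e₁ : (N ⧸ B) →ₗ[R] M₁ := B.liftQ ((LinearMap.fst R M₁ M₂) ∘ₗ φ) hB_ker with he₁
  have he₁surj : Function.Surjective e₁ := by
    intro m
    obtain ⟨x, hx⟩ := hφ (m, 0)
    refine ⟨B.mkQ x, ?_⟩
    rw [he₁, Submodule.mkQ_apply, Submodule.liftQ_apply]
    show (φ x).1 = m
    rw [hx]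
  set e₂ : (N ⧸ A) →ₗ[R] M₂ := A.liftQ ((LinearMap.snd R M₁ M₂) ∘ₗ φ) hA_ker with he₂
  have he₂surj : Function.Surjective e₂ := by
    intro m
    obtain ⟨x, hx⟩ := hφ (0, m)
    refine ⟨A.mkQ x, ?_⟩
    rw [he₂, Submodule.mkQ_apply, Submodule.liftQ_apply]
    show (φ x).2 = m
    rw [hx]
  -- now combine
  have hPfp : Module.FinitePresentation R ((N ⧸ B) × (N ⧸ A)) :=
    SylvesterRankAux.fpProd _ _ hQ₁fp hQ₂fp
  have step1 : ρ.d (ModuleCat.of R ((N ⧸ B) × (N ⧸ A))) ≤ ρ.d N :=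
    ρ.d_le_of_surjective N (ModuleCat.of R ((N ⧸ B) × (N ⧸ A))) hN hPfp θ hθ
  have step2 : ρ.d (ModuleCat.of R ((N ⧸ B) × (N ⧸ A)))
      = ρ.d (ModuleCat.of R (N ⧸ B)) + ρ.d (ModuleCat.of R (N ⧸ A)) :=
    ρ.d_add (ModuleCat.of R (N ⧸ B)) (ModuleCat.of R (N ⧸ A)) hQ₁fp hQ₂fp
  have step3 : ρ.toFG M₁ ≤ ρ.d (ModuleCat.of R (N ⧸ B)) :=
    ρ.toFG_le (N := ModuleCat.of R (N ⧸ B)) hQ₁fp e₁ he₁surj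
  have step4 : ρ.toFG M₂ ≤ ρ.d (ModuleCat.of R (N ⧸ A)) :=
    ρ.toFG_le (N := ModuleCat.of R (N ⧸ A)) hQ₂fp e₂ he₂surj
  linarith

end SylvesterRank

end Auxiliary

/-- The extension of a Sylvester module rank function to finitely
generated modules still satisfies (SMod2) and (SMod3):
`dim (M₁ ⊕ M₂) = dim M₁ + dim M₂` for finitely generated `M₁, M₂`, and
`dim M₃ ≤ dim M₂` and `dim M₂ ≤ dim M₁ + dim M₃` for every exact sequence
`M₁ → M₂ → M₃ → 0` of finitely generated modules. -/
theorem stmt9 (R : Type) [Ring R] (ρ : SylvesterRank R) :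
    (∀ M₁ M₂ : ModuleCat.{0} R, Module.Finite R M₁ → Module.Finite R M₂ →
      ρ.toFG (ModuleCat.of R (M₁ × M₂)) = ρ.toFG M₁ + ρ.toFG M₂) ∧
    (∀ (M₁ M₂ M₃ : ModuleCat.{0} R), Module.Finite R M₁ → Module.Finite R M₂ →
      Module.Finite R M₃ →
      ∀ (f : M₁ →ₗ[R] M₂) (g : M₂ →ₗ[R] M₃), Function.Exact f g →
        Function.Surjective g →
        ρ.toFG M₃ ≤ ρ.toFG M₂ ∧ ρ.toFG M₂ ≤ ρ.toFG M₁ + ρ.toFG M₃) := by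
  classical
  constructor
  · -- additivity
    intro M₁ M₂ h₁ h₂
    haveI := h₁; haveI := h₂
    apply le_antisymm
    · rw [ρ.toFG_eq M₁, ρ.toFG_eq M₂]
      refine SylvesterRankAux.le_csInf_add_csInf (ρ.fgSet_nonempty h₁) (ρ.fgSet_nonempty h₂) ?_
      rintro a ⟨N₁, hN₁, ⟨p₁, hp₁⟩, rfl⟩ b ⟨N₂, hN₂, ⟨p₂, hp₂⟩, rfl⟩
      have hfp : Module.FinitePresentation R (↥N₁ × ↥N₂) :=
        SylvesterRankAux.fpProd _ _ hN₁ hN₂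
      have hle := ρ.toFG_le (M := ModuleCat.of R (M₁ × M₂))
        (N := ModuleCat.of R (↥N₁ × ↥N₂)) hfp (p₁.prodMap p₂)
        (Prod.map_surjective.mpr ⟨hp₁, hp₂⟩)
      rwa [ρ.d_add N₁ N₂ hN₁ hN₂] at hle
    · rw [ρ.toFG_eq (ModuleCat.of R (M₁ × M₂))]
      refine le_csInf (ρ.fgSet_nonempty (inferInstance : Module.Finite R (↥M₁ × ↥M₂))) ?_
      rintro x ⟨N, hN, ⟨φ, hφ⟩, rfl⟩
      exact ρ.toFG_add_toFG_le M₁ M₂ N h₁ h₂ hN φ hφ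
  · -- exactness
    intro M₁ M₂ M₃ h₁ h₂ h₃ f g hfg hg
    haveI := h₁; haveI := h₂; haveI := h₃
    constructor
    · rw [ρ.toFG_eq M₂]
      refine le_csInf (ρ.fgSet_nonempty h₂) ?_
      rintro x ⟨N, hN, ⟨p, hp⟩, rfl⟩
      exact ρ.toFG_le hN (g ∘ₗ p) (hg.comp hp)
    · rw [ρ.toFG_eq M₁, ρ.toFG_eq M₃]
      refine SylvesterRankAux.le_csInf_add_csInf (ρ.fgSet_nonempty h₁) (ρ.fgSet_nonempty h₃) ?_
      rintro a ⟨N₁, hN₁, ⟨q₁, hq₁⟩, rfl⟩ b ⟨N₃, hN₃, ⟨q₃, hq₃⟩, rfl⟩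
      haveI := hN₁; haveI := hN₃
      obtain ⟨n, π, hπ⟩ := Module.Finite.exists_fin' R N₃
      obtain ⟨h, hh⟩ := Module.projective_lifting_property g (q₃ ∘ₗ π) hg
      obtain ⟨t, ht⟩ := Module.FinitePresentation.fg_ker π hπ
      have hker : ∀ x : t, ∃ y : N₁, f (q₁ y) = - h x := by
        intro x
        have hx : (x : Fin n → R) ∈ LinearMap.ker π := by
          rw [← ht]; exact Submodule.subset_span x.2
        have hghx : g (h x) = 0 := by
          have := LinearMap.congr_fun hh (x : Fin n → R)
          simp only [LinearMap.coe_comp, Function.comp_apply] at this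
          rw [this, LinearMap.mem_ker.mp hx, map_zero]
        have : (- h x) ∈ LinearMap.range f := by
          rw [← LinearMap.exact_iff.mp hfg]
          simpa
        obtain ⟨y₀, hy₀⟩ := this
        obtain ⟨y, rfl⟩ := hq₁ y₀
        exact ⟨y, hy₀⟩
      choose y hy using hker
      set w : t → ↥N₁ × (Fin n → R) := fun i => (y i, (i : Fin n → R)) with hw
      set W : Submodule R (↥N₁ × (Fin n → R)) := Submodule.span R (Set.range w) with hW
      have hWfg : W.FG := Submodule.fg_span (Set.finite_range w)
      haveI hDfp : Module.FinitePresentation R (↥N₁ × (Fin n → R)) :=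
        SylvesterRankAux.fpProd _ _ hN₁
          (inferInstance : Module.FinitePresentation R (Fin n → R))
      have hNfp : Module.FinitePresentation R ((↥N₁ × (Fin n → R)) ⧸ W) :=
        Module.finitePresentation_of_surjective W.mkQ W.mkQ_surjective
          (by rw [Submodule.ker_mkQ]; exact hWfg)
      set φ₂ : ↥N₁ × (Fin n → R) →ₗ[R] M₂ := LinearMap.coprod (f ∘ₗ q₁) h with hφ₂
      have hWker : W ≤ LinearMap.ker φ₂ := by
        rw [hW, Submodule.span_le]
        rintro _ ⟨i, rfl⟩
        simp only [SetLike.mem_coe, LinearMap.mem_ker, hφ₂, hw, LinearMap.coprod_apply,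
          LinearMap.coe_comp, Function.comp_apply]
        rw [hy i]; abel
      set e₂ : ((↥N₁ × (Fin n → R)) ⧸ W) →ₗ[R] M₂ := W.liftQ φ₂ hWker with he₂
      have he₂surj : Function.Surjective e₂ := by
        intro m
        obtain ⟨x, hx⟩ := (hq₃.comp hπ) (g m)
        have hgm : g (m - h x) = 0 := by
          have := LinearMap.congr_fun hh x
          simp only [LinearMap.coe_comp, Function.comp_apply] at this
          simp only [Function.comp_apply] at hx
          rw [map_sub, this, hx, sub_self]
        have : m - h x ∈ LinearMap.range f := by
          rw [← LinearMap.exact_iff.mp hfg, LinearMap.mem_ker]; exact hgm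
        obtain ⟨y₀, hy₀⟩ := this
        obtain ⟨nn, rfl⟩ := hq₁ y₀
        refine ⟨W.mkQ (nn, x), ?_⟩
        simp only [he₂, Submodule.mkQ_apply, Submodule.liftQ_apply, hφ₂, LinearMap.coprod_apply,
          LinearMap.coe_comp, Function.comp_apply]
        rw [hy₀]; abel
      have hWker3 : W ≤ LinearMap.ker (π ∘ₗ LinearMap.snd R N₁ (Fin n → R)) := by
        rw [hW, Submodule.span_le]
        rintro _ ⟨i, rfl⟩
        have hx : (i : Fin n → R) ∈ LinearMap.ker π := by
          rw [← ht]; exact Submodule.subset_span i.2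
        simpa [hw] using hx
      set ψ : ((↥N₁ × (Fin n → R)) ⧸ W) →ₗ[R] N₃ :=
        W.liftQ (π ∘ₗ LinearMap.snd R N₁ (Fin n → R)) hWker3 with hψ
      have hψsurj : Function.Surjective ψ := by
        intro z
        obtain ⟨x, rfl⟩ := hπ z
        exact ⟨W.mkQ (0, x), by simp [hψ]⟩
      set ι : ↥N₁ →ₗ[R] ((↥N₁ × (Fin n → R)) ⧸ W) :=
        W.mkQ ∘ₗ LinearMap.inl R N₁ (Fin n → R) with hι
      have hexact : Function.Exact ι ψ := by
        rw [LinearMap.exact_iff]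
        apply le_antisymm
        · rintro c hc
          obtain ⟨⟨a, x⟩, rfl⟩ := W.mkQ_surjective c
          rw [LinearMap.mem_ker, hψ, Submodule.mkQ_apply, Submodule.liftQ_apply] at hc
          simp only [LinearMap.coe_comp, Function.comp_apply] at hc
          have hx : x ∈ Submodule.span R (↑t : Set (Fin n → R)) := by rw [ht]; exact hc
          have key : ∀ x' ∈ Submodule.span R (↑t : Set (Fin n → R)),
              W.mkQ (0, x') ∈ LinearMap.range ι := by
            intro x' hx'
            induction hx' using Submodule.span_induction with
            | mem z hz =>
              refine ⟨-(y ⟨z, hz⟩), ?_⟩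
              rw [hι]
              simp only [LinearMap.coe_comp, Function.comp_apply, LinearMap.inl_apply,
                Submodule.mkQ_apply]
              rw [eq_comm, Submodule.Quotient.eq]
              have hzz : ((0 : ↥N₁), z) - (-(y ⟨z, hz⟩), (0 : Fin n → R)) = w ⟨z, hz⟩ := by
                simp [hw, Prod.ext_iff]
              rw [hzz]
              exact Submodule.subset_span ⟨⟨z, hz⟩, rfl⟩
            | zero => exact ⟨0, by rw [map_zero, ← Submodule.Quotient.mk_zero]; rfl⟩
            | add a b _ _ iha ihb =>
              have hq : W.mkQ (0, a + b) = W.mkQ (0, a) + W.mkQ (0, b) := by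
                rw [← map_add]; congr 1; simp
              rw [hq]; exact Submodule.add_mem _ iha ihb
            | smul r a _ iha =>
              have hq : W.mkQ (0, r • a) = r • W.mkQ (0, a) := by
                rw [← map_smul]; congr 1; simp
              rw [hq]; exact Submodule.smul_mem _ r iha
          have hsplit : W.mkQ (a, x) = ι a + W.mkQ (0, x) := by
            rw [hι]; simp only [LinearMap.coe_comp, Function.comp_apply, LinearMap.inl_apply]
            rw [← map_add]; congr 1; simp
          rw [hsplit]
          exact Submodule.add_mem _ ⟨a, rfl⟩ (key x hx)
        · rintro _ ⟨a, rfl⟩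
          rw [LinearMap.mem_ker, hι]
          simp [hψ]
      have hDE := ρ.d_exact N₁ (ModuleCat.of R ((↥N₁ × (Fin n → R)) ⧸ W)) N₃
        hN₁ hNfp hN₃ ι ψ hexact hψsurj
      have hfinal : ρ.toFG M₂ ≤ ρ.d (ModuleCat.of R ((↥N₁ × (Fin n → R)) ⧸ W)) :=
        ρ.toFG_le (N := ModuleCat.of R ((↥N₁ × (Fin n → R)) ⧸ W)) hNfp e₂ he₂surj
      linarith [hDE.2]
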